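/- Let I ⊂ J be ideals in a Noetherian ring B. Then I is a reduction of J (meaning I·J^n = J^{n+1} for some n ≥ 0) if and only if the inclusion of Rees algebras B[IW] ⊂ B[JW] inside B[W] is a finite (module-finite) ring extension. -/

import Mathlib

set_option maxHeartbeats 1000000
set_option synthInstance.maxHeartbeats 200000

open Polynomial

private lemma redPow {B : Type*} [CommRing B] {I J : Ideal B} {n : ℕ}
    (hn : I * J ^ n = J ^ (n + 1)) : ∀ k, J ^ (n + k) = I ^ k * J ^ n := by
  intro k
  induction k with
  | zero => simp
  | succ k ih =>
    have h1 : n + (k + 1) = (n + k) + 1 := by omega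
    rw [h1, pow_succ, ih, mul_assoc, ← pow_succ J n, ← hn, pow_succ]
    ring

private lemma termLe {B : Type*} [CommRing B] {I J : Ideal B} (hIJ : I ≤ J) {j l n : ℕ}
    (hjl : j + l = n + 1) (hj : 1 ≤ j) : I ^ j * J ^ l ≤ I * J ^ n := by
  have h1 : I ^ j * J ^ l = I * (I ^ (j - 1) * J ^ l) := by
    rw [← mul_assoc, ← pow_succ']
    congr 2
    omega
  rw [h1]
  refine Ideal.mul_mono_right (le_trans (Ideal.mul_mono_left (Ideal.pow_right_mono hIJ _)) ?_)
  rw [← pow_add]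
  have : j - 1 + l = n := by omega
  rw [this]

private lemma auxForward {B : Type*} [CommRing B] [IsNoetherianRing B] (I J : Ideal B)
    (hle : reesAlgebra I ≤ reesAlgebra J) (n : ℕ) (hn : I * J ^ n = J ^ (n + 1)) :
    RingHom.Finite (Subalgebra.inclusion hle).toRingHom := by
  classical
  set f := (Subalgebra.inclusion hle).toRingHom with hf
  letI : Algebra (reesAlgebra I) (reesAlgebra J) := f.toAlgebra
  show Module.Finite (reesAlgebra I) (reesAlgebra J)
  choose T hT using fun m : ℕ => IsNoetherian.noetherian (J ^ m)
  set F : Finset B[X] := (Finset.range (n + 1)).biUnion (fun m => (T m).image (monomial m))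
    with hF
  set sSet : Set (reesAlgebra J) := (Subtype.val : reesAlgebra J → B[X]) ⁻¹' ↑F with hsSet
  have hsFin : sSet.Finite := F.finite_toSet.preimage (Subtype.val_injective.injOn)
  refine ⟨Submodule.fg_def.2 ⟨sSet, hsFin, ?_⟩⟩
  -- key: monomials are in the span
  have keyLow : ∀ m, m ≤ n → ∀ c ∈ J ^ m, ∃ h : (monomial m c : B[X]) ∈ reesAlgebra J,
      (⟨monomial m c, h⟩ : reesAlgebra J) ∈ Submodule.span (reesAlgebra I) sSet := by
    intro m hm c hc
    rw [← hT m] at hc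
    induction hc using Submodule.span_induction with
    | mem x hx =>
      have hxJ : x ∈ J ^ m := (hT m) ▸ Submodule.subset_span hx
      refine ⟨reesAlgebra.monomial_mem.2 hxJ, Submodule.subset_span ?_⟩
      show (monomial m x : B[X]) ∈ (F : Set B[X])
      rw [Finset.mem_coe]
      refine Finset.mem_biUnion.2 ⟨m, Finset.mem_range.2 ?_, Finset.mem_image.2 ⟨x, hx, rfl⟩⟩
      omega
    | zero =>
      have h0 : (monomial m (0 : B) : B[X]) ∈ reesAlgebra J := by
        rw [monomial_zero_right]; exact zero_mem _
      refine ⟨h0, ?_⟩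
      have : (⟨monomial m (0 : B), h0⟩ : reesAlgebra J) = 0 :=
        Subtype.ext (by simp)
      rw [this]; exact Submodule.zero_mem _
    | add x y hxm hym ihx ihy =>
      obtain ⟨hx', hx2⟩ := ihx
      obtain ⟨hy', hy2⟩ := ihy
      refine ⟨?_, ?_⟩
      · rw [map_add]; exact add_mem hx' hy'
      · have : (⟨monomial m (x + y), by rw [map_add]; exact add_mem hx' hy'⟩ :
            reesAlgebra J) = ⟨monomial m x, hx'⟩ + ⟨monomial m y, hy'⟩ :=
          Subtype.ext (by simp [map_add])
        rw [this]; exact Submodule.add_mem _ hx2 hy2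
    | smul b x hxm ihx =>
      obtain ⟨hx', hx2⟩ := ihx
      have hCb : (C b : B[X]) ∈ reesAlgebra I := by
        simpa using (reesAlgebra I).algebraMap_mem b
      have hmem : (monomial m (b • x) : B[X]) ∈ reesAlgebra J := by
        have : (monomial m (b • x) : B[X]) = C b * monomial m x := by
          rw [C_mul_monomial, smul_eq_mul]
        rw [this]
        exact mul_mem (hle hCb) hx'
      refine ⟨hmem, ?_⟩
      have : (⟨monomial m (b • x), hmem⟩ : reesAlgebra J)
          = (⟨C b, hCb⟩ : reesAlgebra I) • (⟨monomial m x, hx'⟩ : reesAlgebra J) := by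
        apply Subtype.ext
        show (monomial m (b • x) : B[X]) = C b * monomial m x
        rw [C_mul_monomial, smul_eq_mul]
      rw [this]
      exact Submodule.smul_mem _ _ hx2
  have key : ∀ m c, c ∈ J ^ m → ∃ h : (monomial m c : B[X]) ∈ reesAlgebra J,
      (⟨monomial m c, h⟩ : reesAlgebra J) ∈ Submodule.span (reesAlgebra I) sSet := by
    intro m c hc
    rcases le_or_gt m n with hm | hm
    · exact keyLow m hm c hc
    · have hm' : m = n + (m - n) := by omega
      rw [hm', redPow hn (m - n)] at hc
      rw [hm']
      clear hm'
      refine Submodule.mul_induction_on hc ?_ ?_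
      · intro a ha b hb
        obtain ⟨hb', hb2⟩ := keyLow n le_rfl b hb
        have hr : (monomial (m - n) a : B[X]) ∈ reesAlgebra I := reesAlgebra.monomial_mem.2 ha
        have hmem : (monomial (n + (m - n)) (a * b) : B[X]) ∈ reesAlgebra J := by
          have : (monomial (n + (m - n)) (a * b) : B[X])
              = monomial (m - n) a * monomial n b := by
            rw [monomial_mul_monomial, Nat.add_comm (m - n) n]
          rw [this]
          exact mul_mem (hle hr) hb'
        refine ⟨hmem, ?_⟩
        have : (⟨monomial (n + (m - n)) (a * b), hmem⟩ : reesAlgebra J)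
            = (⟨monomial (m - n) a, hr⟩ : reesAlgebra I) • (⟨monomial n b, hb'⟩ : reesAlgebra J) := by
          apply Subtype.ext
          show (monomial (n + (m - n)) (a * b) : B[X]) = monomial (m - n) a * monomial n b
          rw [monomial_mul_monomial, Nat.add_comm (m - n) n]
        rw [this]
        exact Submodule.smul_mem _ _ hb2
      · intro x y ihx ihy
        obtain ⟨hx', hx2⟩ := ihx
        obtain ⟨hy', hy2⟩ := ihy
        refine ⟨by rw [map_add]; exact add_mem hx' hy', ?_⟩
        have : (⟨monomial (n + (m - n)) (x + y), by rw [map_add]; exact add_mem hx' hy'⟩ :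
            reesAlgebra J) = ⟨monomial _ x, hx'⟩ + ⟨monomial _ y, hy'⟩ :=
          Subtype.ext (by simp [map_add])
        rw [this]; exact Submodule.add_mem _ hx2 hy2
  -- every element of the Rees algebra of J lies in the span
  rw [eq_top_iff]
  rintro ⟨p, hp⟩ -
  have hps : ∀ i : p.support, (monomial (i : ℕ) (p.coeff i) : B[X]) ∈ reesAlgebra J :=
    fun i => reesAlgebra.monomial_mem.2 (hp i)
  have heq : (⟨p, hp⟩ : reesAlgebra J)
      = ∑ i ∈ p.support.attach, (⟨monomial (i : ℕ) (p.coeff i), hps i⟩ : reesAlgebra J) := by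
    apply Subtype.ext
    rw [AddSubmonoidClass.coe_finset_sum]
    simp only
    rw [Finset.sum_attach p.support (fun i => (monomial i (p.coeff i) : B[X]))]
    exact p.as_sum_support
  rw [heq]
  refine Submodule.sum_mem _ fun i _ => ?_
  obtain ⟨h, hmem⟩ := key i (p.coeff i) (hp i)
  convert hmem using 1

private lemma auxBackward {B : Type*} [CommRing B] (I J : Ideal B) (hIJle : I ≤ J)
    (hle : reesAlgebra I ≤ reesAlgebra J)
    (hfin : RingHom.Finite (Subalgebra.inclusion hle).toRingHom) :
    ∃ n : ℕ, I * J ^ n = J ^ (n + 1) := by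
  classical
  set f := (Subalgebra.inclusion hle).toRingHom with hf
  letI : Algebra (reesAlgebra I) (reesAlgebra J) := f.toAlgebra
  have hmod : Module.Finite (reesAlgebra I) (reesAlgebra J) := hfin
  obtain ⟨s, hs⟩ := hmod.fg_top
  set n : ℕ := s.sup (fun g => (g : B[X]).natDegree) with hn
  refine ⟨n, le_antisymm ?_ ?_⟩
  · calc I * J ^ n ≤ J * J ^ n := Ideal.mul_mono_left (by exact hIJle)
    _ = J ^ (n + 1) := by rw [← pow_succ']
  · intro x hx
    have hxS : (monomial (n + 1) x : B[X]) ∈ reesAlgebra J := reesAlgebra.monomial_mem.2 hx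
    have hmem : (⟨monomial (n + 1) x, hxS⟩ : reesAlgebra J) ∈
        Submodule.span (reesAlgebra I) (↑s : Set (reesAlgebra J)) := hs ▸ Submodule.mem_top
    obtain ⟨c, -, hc⟩ := Submodule.mem_span_finset.1 hmem
    have hval : ∑ g ∈ s, ((c g : B[X]) * (g : B[X])) = monomial (n + 1) x := by
      have := congrArg (Subtype.val) hc
      rw [AddSubmonoidClass.coe_finset_sum] at this
      exact this
    have hx' : x = (∑ g ∈ s, ((c g : B[X]) * (g : B[X]))).coeff (n + 1) := by
      rw [hval, coeff_monomial]
      simp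
    rw [hx', finset_sum_coeff]
    refine Ideal.sum_mem _ fun g hg => ?_
    rw [coeff_mul]
    refine Ideal.sum_mem _ fun jl hjl => ?_
    obtain ⟨j, l⟩ := jl
    have hjl' : j + l = n + 1 := Finset.HasAntidiagonal.mem_antidiagonal.1 hjl
    rcases le_or_gt l n with hl | hl
    · have hj : 1 ≤ j := by omega
      have ha : (c g : B[X]).coeff j ∈ I ^ j := (c g).2 j
      have hb : (g : B[X]).coeff l ∈ J ^ l := g.2 l
      exact termLe hIJle hjl' hj (Ideal.mul_mem_mul ha hb)
    · have hdeg0 : (g : B[X]).natDegree ≤ n :=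
        Finset.le_sup (f := fun g : reesAlgebra J => (g : B[X]).natDegree) hg
      have hdeg : (g : B[X]).natDegree < l := lt_of_le_of_lt hdeg0 hl
      rw [coeff_eq_zero_of_natDegree_lt hdeg, mul_zero]
      exact Ideal.zero_mem _

/-- Reduction iff the inclusion of Rees algebras `B[IW] ⊆ B[JW]` inside `B[W]`
is a module-finite ring extension. -/
theorem reduction_iff_reesAlgebra_finite
    (B : Type*) [CommRing B] [IsNoetherianRing B] (I J : Ideal B) (hIJ : I ≤ J) :
    (∃ n : ℕ, I * J ^ n = J ^ (n + 1)) ↔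
      RingHom.Finite (Subalgebra.inclusion
        (show reesAlgebra I ≤ reesAlgebra J from fun f hf =>
          (mem_reesAlgebra_iff J f).2 fun i =>
            Ideal.pow_right_mono hIJ i ((mem_reesAlgebra_iff I f).1 hf i))).toRingHom := by
  constructor
  · rintro ⟨n, hn⟩
    exact auxForward I J _ n hn
  · intro h
    exact auxBackward I J hIJ _ h
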